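/- For every non-negative integer n, the harmonic number satisfies H_{n+1} = (1/n!) · Σ_{k=0}^{n} (-1)^k · [n+1, k+1] · B_k, where [n+1, k+1] is the unsigned Stirling number of the first kind and B_k is the k-th Bernoulli number (with the convention B_1 = -1/2). Equivalently, this is the specialization p = 1 of the identity H_{n+1}^{(p)} = (1/n!) Σ_{j=0}^{n} [n+1, j+1] B_j^{(p)}, using that B_k^{(1)} = (-1)^k B_k. -/

import Mathlib

/-- Unsigned Stirling numbers of the first kind. -/
def stirlingFirst : ℕ → ℕ → ℕ
  | 0, 0 => 1
  | 0, _ + 1 => 0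
  | _ + 1, 0 => 0
  | n + 1, k + 1 => n * stirlingFirst n (k + 1) + stirlingFirst n k

section Aux

open Polynomial Finset

noncomputable def rp (n : ℕ) : ℚ[X] := ∏ j ∈ range n, (X + C ((j : ℚ) + 1))

lemma stirlingFirst_zero_right : ∀ n, 0 < n → stirlingFirst n 0 = 0
  | _ + 1, _ => rfl

lemma stirlingFirst_eq_zero : ∀ n k, n < k → stirlingFirst n k = 0
  | 0, _ + 1, _ => rfl
  | n + 1, k + 1, h => by
    have h1 : n < k + 1 := by omega
    have h2 : n < k := by omega
    show n * stirlingFirst n (k + 1) + stirlingFirst n k = 0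
    rw [stirlingFirst_eq_zero n (k+1) h1, stirlingFirst_eq_zero n k h2]
    simp

lemma rp_eq (n : ℕ) :
    rp n = ∑ k ∈ range (n + 1), C ((stirlingFirst (n + 1) (k + 1) : ℚ)) * X ^ k := by
  induction n with
  | zero => simp [rp, show stirlingFirst 1 1 = 1 from rfl]
  | succ n ih =>
    have hrec : ∀ k, (stirlingFirst (n + 2) (k + 1) : ℚ)
        = (n + 1) * stirlingFirst (n + 1) (k + 1) + stirlingFirst (n + 1) k := by
      intro k
      show ((((n+1) * stirlingFirst (n+1) (k+1) + stirlingFirst (n+1) k : ℕ)) : ℚ) = _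
      push_cast; ring
    have : rp (n + 1) = rp n * (X + C ((n : ℚ) + 1)) := by
      rw [rp, rp, prod_range_succ]
    rw [this, ih]
    have hsum : ∑ k ∈ range (n + 2), C ((stirlingFirst (n + 2) (k + 1) : ℚ)) * X ^ k
        = C ((n : ℚ) + 1) * ∑ k ∈ range (n + 2), C ((stirlingFirst (n + 1) (k + 1) : ℚ)) * X ^ k
          + ∑ k ∈ range (n + 2), C ((stirlingFirst (n + 1) k : ℚ)) * X ^ k := by
      rw [mul_sum, ← sum_add_distrib]
      refine sum_congr rfl fun k _ => ?_
      rw [hrec k]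
      rw [map_add, map_mul]
      push_cast
      ring
    rw [hsum]
    have h1 : ∑ k ∈ range (n + 2), C ((stirlingFirst (n + 1) (k + 1) : ℚ)) * X ^ k
        = ∑ k ∈ range (n + 1), C ((stirlingFirst (n + 1) (k + 1) : ℚ)) * X ^ k := by
      rw [sum_range_succ, stirlingFirst_eq_zero (n+1) (n+2) (by omega)]
      simp
    have h2 : ∑ k ∈ range (n + 2), C ((stirlingFirst (n + 1) k : ℚ)) * X ^ k
        = X * ∑ k ∈ range (n + 1), C ((stirlingFirst (n + 1) (k + 1) : ℚ)) * X ^ k := by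
      rw [sum_range_succ', stirlingFirst_zero_right (n+1) (by omega), mul_sum]
      simp only [Nat.cast_zero, map_zero, zero_mul, add_zero, pow_zero, mul_one]
      exact sum_congr rfl fun k _ => by ring
    rw [h1, h2]
    ring

lemma rp_succ (n : ℕ) : rp (n + 1) = rp n * (X + C ((n : ℚ) + 1)) := by
  rw [rp, rp, prod_range_succ]

lemma rp_comp (n : ℕ) : (X * rp n).comp (X + 1) = rp (n + 1) := by
  rw [mul_comp, X_comp, rp, Polynomial.prod_comp]
  have hc : ∀ j : ℕ, (X + C ((j : ℚ) + 1)).comp (X + 1) = X + C ((j : ℚ) + 2) := by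
    intro j
    simp only [add_comp, X_comp, C_comp, map_add, map_one, map_ofNat, one_comp]
    ring
  calc _ = (X + 1) * ∏ j ∈ range n, (X + C ((j : ℚ) + 2)) := by
        rw [prod_congr rfl fun j _ => hc j]
    _ = ∏ j ∈ range (n + 1), (X + C ((j : ℚ) + 1)) := by
        rw [prod_range_succ']
        have : (X + C ((0 : ℕ) + 1 : ℚ)) = X + 1 := by norm_num
        rw [this, mul_comm]
        refine congrArg (· * (X + 1)) (prod_congr rfl fun j _ => ?_)
        push_cast; ring_nf
    _ = rp (n + 1) := by rw [rp]

lemma eval_step (n : ℕ) (x : ℚ) :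
    eval (x + 1) (X * rp n) = eval x (X * rp n) + ((n : ℚ) + 1) * eval x (rp n) := by
  have h := rp_comp n
  have := congrArg (eval x) h
  rw [eval_comp] at this
  simp only [eval_add, eval_X, eval_one, eval_mul, eval_C, rp_succ] at this ⊢
  rw [this]; ring

lemma telescope (n N : ℕ) :
    ((n : ℚ) + 1) * ∑ m ∈ Ico 1 (N + 1), eval (m : ℚ) (rp n)
      = eval ((N : ℚ)) (rp (n + 1)) - eval 1 (X * rp n) := by
  have key : ∀ m : ℕ, ((n : ℚ) + 1) * eval ((m : ℚ) + 1) (rp n)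
      = eval ((m : ℚ) + 1 + 1) (X * rp n) - eval ((m : ℚ) + 1) (X * rp n) := by
    intro m
    rw [eval_step n ((m : ℚ) + 1)]
    ring
  have reindex : ∑ m ∈ Ico 1 (N + 1), eval (m : ℚ) (rp n)
      = ∑ m ∈ range N, eval ((m : ℚ) + 1) (rp n) := by
    rw [← Nat.Ico_zero_eq_range, Finset.sum_Ico_eq_sum_range]
    simp [add_comm]
  rw [reindex, mul_sum]
  have : ∀ m ∈ range N, ((n : ℚ) + 1) * eval ((m : ℚ) + 1) (rp n)
      = (fun m : ℕ => eval ((m : ℚ) + 1) (X * rp n)) (m + 1)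
        - (fun m : ℕ => eval ((m : ℚ) + 1) (X * rp n)) m := by
    intro m _
    simp only [Nat.cast_add, Nat.cast_one]
    rw [key m]
  rw [sum_congr rfl this, Finset.sum_range_sub (fun m : ℕ => eval ((m : ℚ) + 1) (X * rp n))]
  have : eval ((N : ℚ) + 1) (X * rp n) = eval (N : ℚ) (rp (n + 1)) := by
    rw [← rp_comp n, eval_comp]
    simp
  simp only [Nat.cast_zero, zero_add] at *
  rw [this]

noncomputable def Gp (n : ℕ) : ℚ[X] :=
  ∑ k ∈ range (n + 1), C ((stirlingFirst (n + 1) (k + 1) : ℚ)) *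
    ∑ i ∈ range (k + 1),
      C (bernoulli' i * ((k + 1).choose i : ℚ) / ((k : ℚ) + 1)) * X ^ (k + 1 - i)

lemma eval_Gp (n N : ℕ) :
    eval (N : ℚ) (Gp n) = ∑ m ∈ Ico 1 (N + 1), eval (m : ℚ) (rp n) := by
  have hr : ∀ m : ℕ, eval (m : ℚ) (rp n)
      = ∑ k ∈ range (n + 1), (stirlingFirst (n + 1) (k + 1) : ℚ) * (m : ℚ) ^ k := by
    intro m
    rw [rp_eq]
    simp [eval_finset_sum]
  calc eval (N : ℚ) (Gp n)
      = ∑ k ∈ range (n + 1), (stirlingFirst (n + 1) (k + 1) : ℚ) *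
          ∑ i ∈ range (k + 1),
            bernoulli' i * ((k + 1).choose i : ℚ) * (N : ℚ) ^ (k + 1 - i) / ((k : ℚ) + 1) := by
        rw [Gp]
        simp only [eval_finset_sum, eval_mul, eval_C, eval_pow, eval_X]
        refine sum_congr rfl fun k _ => ?_
        rw [mul_sum, mul_sum]
        apply sum_congr rfl
        intro i _
        ring
    _ = ∑ k ∈ range (n + 1), (stirlingFirst (n + 1) (k + 1) : ℚ) *
          ∑ m ∈ Ico 1 (N + 1), (m : ℚ) ^ k := by
        refine sum_congr rfl fun k _ => ?_
        rw [sum_Ico_pow N k]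
    _ = ∑ m ∈ Ico 1 (N + 1), eval (m : ℚ) (rp n) := by
        simp_rw [mul_sum, hr]
        rw [Finset.sum_comm]

noncomputable def Fp (n : ℕ) : ℚ[X] :=
  C (((n : ℚ) + 1)⁻¹) * (rp (n + 1) - C (eval 1 (X * rp n)))

lemma Gp_eq_Fp (n : ℕ) : Gp n = Fp n := by
  apply eq_of_infinite_eval_eq
  apply Set.Infinite.mono (s := Set.range (Nat.cast : ℕ → ℚ))
  · rintro x ⟨N, rfl⟩
    show eval (N : ℚ) (Gp n) = eval (N : ℚ) (Fp n)
    have hne : ((n : ℚ) + 1) ≠ 0 := by positivity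
    rw [eval_Gp, Fp, eval_mul, eval_C, eval_sub, eval_C, ← telescope n N,
      inv_mul_cancel_left₀ hne]
  · exact Set.infinite_range_of_injective (fun a b h => by exact_mod_cast h)

lemma coeff_one_Gp (n : ℕ) :
    (Gp n).coeff 1
      = ∑ k ∈ Finset.range (n + 1), (stirlingFirst (n + 1) (k + 1) : ℚ) * bernoulli' k := by
  rw [Gp, finset_sum_coeff]
  refine sum_congr rfl fun k _ => ?_
  rw [coeff_C_mul, finset_sum_coeff]
  have : ∑ i ∈ range (k + 1),
      (C (bernoulli' i * ((k + 1).choose i : ℚ) / ((k : ℚ) + 1)) * X ^ (k + 1 - i)).coeff 1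
      = bernoulli' k := by
    rw [Finset.sum_eq_single k]
    · rw [coeff_C_mul, coeff_X_pow]
      have : k + 1 - k = 1 := by omega
      rw [this, if_pos rfl, Nat.choose_succ_self_right]
      have hne : ((k : ℚ) + 1) ≠ 0 := by positivity
      field_simp
      simp
    · intro i hi hik
      have : i < k := by simp at hi; omega
      rw [coeff_C_mul, coeff_X_pow, if_neg (by omega)]
      simp
    · intro h
      exact absurd (self_mem_range_succ k) h
  rw [this]

lemma coeff_rp (m : ℕ) :
    (rp m).coeff 0 = (m.factorial : ℚ) ∧
    (rp m).coeff 1 = (m.factorial : ℚ) * ∑ j ∈ range m, 1 / ((j : ℚ) + 1) := by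
  induction m with
  | zero => simp [rp, coeff_one]
  | succ m ih =>
    obtain ⟨h0, h1⟩ := ih
    have hmul : rp (m + 1) = rp m * X + rp m * C ((m : ℚ) + 1) := by
      rw [rp_succ]; ring
    constructor
    · rw [hmul, coeff_add, coeff_mul_C, h0]
      rw [coeff_mul_X_zero]
      push_cast [Nat.factorial_succ]
      ring
    · rw [hmul, coeff_add, coeff_mul_C, coeff_mul_X, h0, h1, sum_range_succ]
      push_cast [Nat.factorial_succ]
      have hne : ((m : ℚ) + 1) ≠ 0 := by positivity
      field_simp
      ring

lemma key_identity (n : ℕ) :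
    ∑ k ∈ range (n + 1), (stirlingFirst (n + 1) (k + 1) : ℚ) * bernoulli' k
      = (n.factorial : ℚ) * ∑ j ∈ range (n + 1), 1 / ((j : ℚ) + 1) := by
  have h := congrArg (fun p : ℚ[X] => p.coeff 1) (Gp_eq_Fp n)
  rw [coeff_one_Gp] at h
  rw [h, Fp, coeff_C_mul, coeff_sub, (coeff_rp (n + 1)).2]
  have hC : (C (eval 1 (X * rp n))).coeff 1 = 0 := by
    rw [coeff_C, if_neg one_ne_zero]
  rw [hC, sub_zero]
  have hne : ((n : ℚ) + 1) ≠ 0 := by positivity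
  rw [Nat.factorial_succ]
  push_cast
  field_simp

end Aux

/-- Harmonic number `H_n = ∑_{k=1}^n 1/k`. -/
def harmonicNumber (n : ℕ) : ℚ := ∑ k ∈ Finset.Icc 1 n, (1 : ℚ) / k

theorem harmonic_eq_sum_stirlingFirst_bernoulli (n : ℕ) :
    harmonicNumber (n + 1) =
      (1 / (Nat.factorial n : ℚ)) *
        ∑ k ∈ Finset.range (n + 1),
          (-1 : ℚ) ^ k * (stirlingFirst (n + 1) (k + 1) : ℚ) * bernoulli k := by
  have hsum : ∑ k ∈ Finset.range (n + 1),
      (-1 : ℚ) ^ k * (stirlingFirst (n + 1) (k + 1) : ℚ) * bernoulli k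
      = ∑ k ∈ Finset.range (n + 1), (stirlingFirst (n + 1) (k + 1) : ℚ) * bernoulli' k := by
    refine Finset.sum_congr rfl fun k _ => ?_
    rw [bernoulli'_eq_bernoulli]
    ring
  have hH : harmonicNumber (n + 1) = ∑ j ∈ Finset.range (n + 1), 1 / ((j : ℚ) + 1) := by
    rw [harmonicNumber, ← Finset.Ico_add_one_right_eq_Icc, Finset.sum_Ico_eq_sum_range]
    simp [add_comm]
  rw [hsum, key_identity, hH]
  have hne : (n.factorial : ℚ) ≠ 0 := by
    exact_mod_cast Nat.factorial_ne_zero n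
  field_simp
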